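/- Let F_2 be the free group with basis x_1, x_2 and let ql : F_2 → ℤ be defined on reduced syllable forms by ql(x_{i₁}^{α₁}⋯x_{i_t}^{α_t}) = Σ_{j=1}^t tr(α_j). Then for every integer j ≥ 1, the element a_j = x_2^{-3j} x_1^{-3j} (x_2 x_1)^{3j} lies in the commutator subgroup of F_2 and satisfies ql(a_j) = 6j. In particular, ql is unbounded on the commutator subgroup of F_2. -/

import Mathlib

/-- `tr m` is `-1, 0, 1` according as `m ≡ -1, 0, 1 (mod 3)`. -/
def tr (m : ℤ) : ℤ := if m % 3 = 0 then 0 else if m % 3 = 1 then 1 else -1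

/-- `ql w` is the sum of `tr` of the exponents of the syllables in the
reduced syllable form of `w`. -/
def ql {n : ℕ} (w : FreeGroup (Fin n)) : ℤ :=
  ((w.toWord.splitBy (fun p q => p.1 == q.1)).map
    (fun s => tr ((s.map (fun p => if p.2 then (1 : ℤ) else -1)).sum))).sum

/-- `a j = x₂^{-3j} x₁^{-3j} (x₂ x₁)^{3j}` in the free group `F₂` on `x₁ = of 0`,
`x₂ = of 1`. -/
def aElt (j : ℕ) : FreeGroup (Fin 2) :=
  (FreeGroup.of 1) ^ (-(3 * (j : ℤ))) * (FreeGroup.of 0) ^ (-(3 * (j : ℤ))) *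
    (FreeGroup.of 1 * FreeGroup.of 0) ^ (3 * (j : ℤ))

-- step lemmas for splitBy.loop
section loops
variable {α : Type*} (R : α → α → Bool)

lemma loop_nil (ag g gs) : List.splitBy.loop R [] ag g gs = ((ag::g).reverse :: gs).reverse := rfl

lemma loop_cons_true {ag a : α} (h : R ag a = true) (as g gs) :
    List.splitBy.loop R (a::as) ag g gs = List.splitBy.loop R as a (ag::g) gs := by
  rw [List.splitBy.loop, h]

lemma loop_cons_false {ag a : α} (h : R ag a = false) (as g gs) :
    List.splitBy.loop R (a::as) ag g gs =
      List.splitBy.loop R as a [] ((ag::g).reverse :: gs) := by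
  rw [List.splitBy.loop, h]

lemma loop_replicate {a : α} (h : R a a = true) :
    ∀ (k : ℕ) (rest g gs), List.splitBy.loop R (List.replicate k a ++ rest) a g gs =
      List.splitBy.loop R rest a (List.replicate k a ++ g) gs := by
  intro k
  induction k with
  | zero => intro rest g gs; simp
  | succ k ih =>
    intro rest g gs
    rw [List.replicate_succ, List.cons_append, loop_cons_true R h, ih rest (a::g) gs]
    congr 1
    rw [show (a :: g) = [a] ++ g from rfl, ← List.append_assoc, ← List.replicate_succ',
      List.replicate_succ, List.cons_append]

end loops

-- the alternating word
def altW : ℕ → List (Fin 2 × Bool)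
  | 0 => []
  | m+1 => (1, true) :: (0, true) :: altW m

def altG : ℕ → List (List (Fin 2 × Bool))
  | 0 => []
  | k+1 => altG k ++ [[((0:Fin 2), true)], [((1:Fin 2), true)]]

abbrev Rq : Fin 2 × Bool → Fin 2 × Bool → Bool := fun p q => p.1 == q.1

lemma loop_alt : ∀ (k : ℕ) (gs), List.splitBy.loop Rq (((0:Fin 2), true) :: altW k) (1, true) [] gs
    = ((altG k ++ [[((0:Fin 2), true)], [((1:Fin 2), true)]]) ++ gs).reverse := by
  intro k
  induction k with
  | zero =>
    intro gs
    rw [altW, loop_cons_false _ (by decide : Rq ((1:Fin 2),true) ((0:Fin 2),true) = false), loop_nil]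
    simp [altG]
  | succ k ih =>
    intro gs
    rw [altW, loop_cons_false _ (by decide : Rq ((1:Fin 2),true) ((0:Fin 2),true) = false),
      loop_cons_false _ (by decide : Rq ((0:Fin 2),true) ((1:Fin 2),true) = false), ih]
    simp [altG]

def Wm (m : ℕ) : List (Fin 2 × Bool) :=
  List.replicate m (1, false) ++ (List.replicate m (0, false) ++ altW m)

lemma splitBy_cons {α : Type*} (R : α → α → Bool) (a : α) (l : List α) :
    List.splitBy R (a :: l) = List.splitBy.loop R l a [] [] := rfl

lemma splitBy_Wm (n : ℕ) :
    (Wm (n+1)).splitBy Rq =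
      ((altG n ++ [[((0:Fin 2),true)], [((1:Fin 2),true)]]) ++
        [List.replicate (n+1) ((0:Fin 2),false), List.replicate (n+1) ((1:Fin 2),false)]).reverse := by
  rw [Wm, List.replicate_succ, List.cons_append, splitBy_cons,
    loop_replicate Rq (by decide : Rq ((1:Fin 2),false) ((1:Fin 2),false) = true),
    List.replicate_succ (a := ((0:Fin 2),false)), List.cons_append,
    loop_cons_false _ (by decide : Rq ((1:Fin 2),false) ((0:Fin 2),false) = false),
    loop_replicate Rq (by decide : Rq ((0:Fin 2),false) ((0:Fin 2),false) = true),
    altW, loop_cons_false _ (by decide : Rq ((0:Fin 2),false) ((1:Fin 2),true) = false),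
    loop_alt]
  simp [List.replicate_succ']
  constructor <;> rw [← List.replicate_succ, List.replicate_succ']

abbrev fq : List (Fin 2 × Bool) → ℤ :=
  fun s => tr ((s.map (fun p => if p.2 then (1 : ℤ) else -1)).sum)

lemma fq_single (i : Fin 2) : fq [(i, true)] = 1 := by norm_num [fq, tr]

lemma fq_replicate_neg (m : ℕ) (i : Fin 2) (h : (3:ℤ) ∣ (m:ℤ)) :
    fq (List.replicate m (i, false)) = 0 := by
  simp only [fq, List.map_replicate, if_neg Bool.false_ne_true, List.sum_replicate, nsmul_eq_mul,
    mul_neg_one, tr]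
  rw [if_pos (by omega)]

lemma altG_sum (k : ℕ) : ((altG k).map fq).sum = 2 * k := by
  induction k with
  | zero => simp [altG]
  | succ k ih => simp [altG, ih, fq_single]; ring

lemma sum_Wm (j : ℕ) (hj : 1 ≤ j) :
    (((Wm (3*j)).splitBy Rq).map fq).sum = 6 * (j:ℤ) := by
  obtain ⟨n, hn⟩ : ∃ n, 3*j = n + 1 := ⟨3*j - 1, by omega⟩
  rw [hn, splitBy_Wm]
  rw [List.map_reverse, List.sum_reverse]
  have h3 : (3:ℤ) ∣ ((n+1 : ℕ) : ℤ) := by push_cast; omega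
  simp [altG_sum, fq_single, fq_replicate_neg _ _ h3]
  omega

abbrev Pnc : Fin 2 × Bool → Fin 2 × Bool → Prop :=
  fun a b => ¬(a.1 = b.1 ∧ a.2 = !b.2)

lemma reduce_of_chain : ∀ L : List (Fin 2 × Bool), List.Chain' Pnc L →
    FreeGroup.reduce L = L := by
  intro L
  induction L with
  | nil => intro _; rfl
  | cons x L ih =>
    intro h
    rw [FreeGroup.reduce.cons, ih h.tail]
    cases L with
    | nil => rfl
    | cons y L' =>
      simp only []
      rw [if_neg (List.isChain_cons_cons.mp h).1]

lemma chain'_replicate_append (a : Fin 2 × Bool) (ha : Pnc a a) :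
    ∀ (k : ℕ) (l : List (Fin 2 × Bool)), List.Chain' Pnc l →
      (∀ y ∈ l.head?, Pnc a y) → List.Chain' Pnc (List.replicate k a ++ l) := by
  intro k
  induction k with
  | zero => intro l hl _; simpa using hl
  | succ k ih =>
    intro l hl hy
    rw [List.replicate_succ, List.cons_append, List.Chain', List.isChain_cons]
    refine ⟨?_, ih l hl hy⟩
    intro y hyy
    cases k with
    | zero =>
      simp only [List.replicate_zero, List.nil_append] at hyy
      exact hy y hyy
    | succ k =>
      rw [List.replicate_succ, List.cons_append, List.head?_cons, Option.mem_some_iff] at hyy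
      exact hyy ▸ ha

lemma chain'_altW_cons : ∀ (m : ℕ) (x : Fin 2 × Bool), x.1 = 0 →
    List.Chain' Pnc (x :: altW m) := by
  intro m
  induction m with
  | zero => intro x _; simp [altW, List.Chain', List.isChain_singleton]
  | succ m ih =>
    intro x hx
    rw [altW, List.Chain', List.isChain_cons_cons]
    refine ⟨by simp [Pnc, hx], ?_⟩
    rw [List.isChain_cons_cons]
    exact ⟨by decide, ih (0, true) rfl⟩

lemma altW_head : ∀ n, (altW (n+1)).head? = some (1, true) := by
  intro n; rw [altW]; rfl

lemma chain'_Wm (n : ℕ) : List.Chain' Pnc (Wm (n+1)) := by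
  rw [Wm]
  apply chain'_replicate_append _ (by decide)
  · apply chain'_replicate_append _ (by decide)
    · rw [altW, List.Chain', List.isChain_cons_cons]
      exact ⟨by decide, chain'_altW_cons _ (0, true) rfl⟩
    · intro y hy
      rw [altW_head, Option.mem_some_iff] at hy
      subst hy; decide
  · intro y hy
    rw [List.replicate_succ, List.cons_append, List.head?_cons, Option.mem_some_iff] at hy
    subst hy; decide

lemma of_eq_mk (a : Fin 2) : FreeGroup.of a = FreeGroup.mk [(a, true)] := rfl

lemma inv_of_eq (a : Fin 2) : (FreeGroup.of a)⁻¹ = FreeGroup.mk [(a, false)] := by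
  rw [of_eq_mk, FreeGroup.inv_mk]; rfl

lemma mk_single_pow (x : Fin 2 × Bool) : ∀ m : ℕ,
    (FreeGroup.mk [x])^m = FreeGroup.mk (List.replicate m x) := by
  intro m
  induction m with
  | zero => simp [FreeGroup.one_eq_mk]
  | succ m ih => rw [pow_succ, ih, FreeGroup.mul_mk, ← List.replicate_succ']

lemma pair_pow : ∀ m : ℕ,
    (FreeGroup.of 1 * FreeGroup.of 0 : FreeGroup (Fin 2))^m = FreeGroup.mk (altW m) := by
  intro m
  induction m with
  | zero => simp [FreeGroup.one_eq_mk, altW]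
  | succ m ih =>
    rw [pow_succ', ih, of_eq_mk, of_eq_mk, FreeGroup.mul_mk, FreeGroup.mul_mk, altW]
    rfl

lemma aElt_eq (j : ℕ) : aElt j = FreeGroup.mk (Wm (3*j)) := by
  have h : (3 * (j:ℤ)) = ((3*j : ℕ) : ℤ) := by push_cast; ring
  rw [aElt, h, zpow_neg, zpow_natCast, zpow_neg, zpow_natCast, zpow_natCast,
    ← inv_pow, ← inv_pow, inv_of_eq, inv_of_eq, mk_single_pow, mk_single_pow, pair_pow,
    FreeGroup.mul_mk, FreeGroup.mul_mk, Wm, ← List.append_assoc]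

lemma toWord_aElt (j : ℕ) (hj : 1 ≤ j) : (aElt j).toWord = Wm (3*j) := by
  obtain ⟨n, hn⟩ : ∃ n, 3*j = n + 1 := ⟨3*j - 1, by omega⟩
  rw [aElt_eq, FreeGroup.toWord_mk, hn, reduce_of_chain _ (chain'_Wm n)]

lemma ql_aElt (j : ℕ) (hj : 1 ≤ j) : ql (aElt j) = 6 * (j:ℤ) := by
  rw [ql, toWord_aElt j hj]
  exact sum_Wm j hj

lemma aElt_mem (j : ℕ) : aElt j ∈ commutator (FreeGroup (Fin 2)) := by
  apply (QuotientGroup.eq_one_iff _).mp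
  show Abelianization.of (aElt j) = 1
  rw [aElt, map_mul, map_mul, map_zpow, map_zpow, map_zpow, map_mul, mul_zpow,
    mul_comm ((Abelianization.of (FreeGroup.of 1)) ^ (3*(j:ℤ)))]
  group

theorem ql_unbounded_on_commutator :
    (∀ j : ℕ, 1 ≤ j →
      aElt j ∈ commutator (FreeGroup (Fin 2)) ∧ ql (aElt j) = 6 * (j : ℤ)) ∧
    ∀ C : ℤ, ∃ w ∈ commutator (FreeGroup (Fin 2)), C < ql w := by
  refine ⟨fun j hj => ⟨aElt_mem j, ql_aElt j hj⟩, fun C => ?_⟩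
  refine ⟨aElt (C.toNat + 1), aElt_mem _, ?_⟩
  rw [ql_aElt _ (by omega)]
  omega
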